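/- arXiv:0809.0953 — 3 statements merged into one kernel-verified Lean document; each statement's English description precedes it below -/
import Mathlib

section
/- Let V : ℝ → ℝ be smooth, nonnegative, even, with V''(r) → V''_∞ > 0 as |r| → ∞. Then there exist constants C > 0 and C' ≥ 0 such that V'(r)^2 ≤ C (r * V'(r) + C') for all r ∈ ℝ. -/
open Filter Set

theorem Vprime_sq_bound
    (V : ℝ → ℝ) (Vinf : ℝ)
    (hV : ContDiff ℝ 2 V)
    (hVnonneg : ∀ r, 0 ≤ V r)
    (hVeven : ∀ r, V (-r) = V r)
    (hVinf : 0 < Vinf)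
    (htop : Tendsto (deriv (deriv V)) atTop (nhds Vinf))
    (hbot : Tendsto (deriv (deriv V)) atBot (nhds Vinf)) :
    ∃ C > 0, ∃ C' ≥ 0, ∀ r : ℝ, (deriv V r) ^ 2 ≤ C * (r * deriv V r + C') := by
  -- regularity facts
  have hV2 : ContDiff ℝ ((1 : ℕ) + 1) V := by exact_mod_cast hV
  have hV' : ContDiff ℝ 1 (deriv V) := by
    have := (contDiff_succ_iff_deriv.mp hV2).2.2
    exact_mod_cast this
  have hd1 : Differentiable ℝ (deriv V) := (contDiff_one_iff_deriv.mp hV').1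
  have hcont1 : Continuous (deriv V) := hd1.continuous
  -- odd derivative
  have hodd : ∀ r, deriv V (-r) = - deriv V r := by
    intro r
    have h1 : (fun x => V (-x)) = V := funext hVeven
    have h2 : deriv (fun x => V (-x)) r = -deriv V (-r) := deriv_comp_neg V r
    rw [h1] at h2
    linarith
  -- eventual bounds on V''
  have hev := htop.eventually (Ioo_mem_nhds (show Vinf / 2 < Vinf by linarith)
    (show Vinf < Vinf + 1 by linarith))
  obtain ⟨R0, hR0⟩ := eventually_atTop.mp hev
  set R : ℝ := max R0 1 with hRdef
  have hR1 : (1:ℝ) ≤ R := le_max_right _ _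
  have hRpos : (0:ℝ) < R := lt_of_lt_of_le one_pos hR1
  have hbound : ∀ s, R ≤ s → Vinf/2 < deriv (deriv V) s ∧ deriv (deriv V) s < Vinf + 1 := by
    intro s hs
    exact hR0 s (le_trans (le_max_left _ _) hs)
  -- lower slope bound for deriv V on [R, ∞)
  have low : ∀ r, R ≤ r → deriv V R + Vinf/2 * (r - R) ≤ deriv V r := by
    intro r hr
    have hg : MonotoneOn (fun x => deriv V x - Vinf/2 * x) (Ici R) := by
      apply monotoneOn_of_deriv_nonneg (convex_Ici R)
      · exact (hcont1.sub (continuous_const.mul continuous_id)).continuousOn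
      · exact (hd1.sub ((differentiable_const _).mul differentiable_id)).differentiableOn
      · intro x hx
        rw [interior_Ici] at hx
        have hx' := (hbound x (le_of_lt hx)).1
        have hdx : deriv (fun x => deriv V x - Vinf/2 * x) x
            = deriv (deriv V) x - Vinf/2 := by
          have h := ((hd1 x).hasDerivAt.sub ((hasDerivAt_id x).const_mul (Vinf/2))).deriv
          simp only [id_eq, mul_one] at h
          exact h
        rw [hdx]; linarith
    have := hg (self_mem_Ici) hr hr
    simp only at this
    linarith
  -- upper slope bound
  have high : ∀ r, R ≤ r → deriv V r ≤ deriv V R + (Vinf+1) * (r - R) := by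
    intro r hr
    have hg : MonotoneOn (fun x => (Vinf+1) * x - deriv V x) (Ici R) := by
      apply monotoneOn_of_deriv_nonneg (convex_Ici R)
      · exact ((continuous_const.mul continuous_id).sub hcont1).continuousOn
      · exact (((differentiable_const _).mul differentiable_id).sub hd1).differentiableOn
      · intro x hx
        rw [interior_Ici] at hx
        have hx' := (hbound x (le_of_lt hx)).2
        have hdx : deriv (fun x => (Vinf+1) * x - deriv V x) x
            = (Vinf+1) - deriv (deriv V) x := by
          have h := (((hasDerivAt_id x).const_mul (Vinf+1)).sub (hd1 x).hasDerivAt).deriv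
          simp only [id_eq, mul_one] at h
          exact h
        rw [hdx]; linarith
    have := hg (self_mem_Ici) hr hr
    simp only at this
    linarith
  set D : ℝ := deriv V R with hDdef
  set A : ℝ := |D| + Vinf + 1 with hAdef
  have hA1 : (1:ℝ) ≤ A := by have := abs_nonneg D; simp only [hAdef]; linarith
  have hApos : (0:ℝ) < A := lt_of_lt_of_le one_pos hA1
  set R2 : ℝ := R + (2*|D| + 2)/Vinf with hR2def
  have hR2R : R ≤ R2 := by
    have h1 : (0:ℝ) ≤ (2*|D| + 2)/Vinf := by positivity
    simp only [hR2def]; linarith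
  have hR2pos : (0:ℝ) < R2 := lt_of_lt_of_le hRpos hR2R
  have hR21 : (1:ℝ) ≤ R2 := le_trans hR1 hR2R
  -- key identity
  have hkey : Vinf/2 * ((2*|D| + 2)/Vinf) = |D| + 1 := by
    field_simp
  -- main bound for r ≥ R2
  have main : ∀ r, R2 ≤ r → (deriv V r)^2 ≤ A * (r * deriv V r) := by
    intro r hr
    have hrR : R ≤ r := le_trans hR2R hr
    have hpos : 0 < deriv V r := by
      have h1 := low r hrR
      have h2 : Vinf/2 * (r - R) ≥ Vinf/2 * ((2*|D| + 2)/Vinf) := by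
        apply mul_le_mul_of_nonneg_left _ (by positivity)
        simp only [hR2def] at hr; linarith
      rw [hkey] at h2
      have := neg_abs_le D
      linarith
    have hup : deriv V r ≤ A * r := by
      have h1 := high r hrR
      have h2 : deriv V r ≤ |D| + (Vinf+1) * r := by
        have := le_abs_self D
        nlinarith [mul_nonneg (show (0:ℝ) ≤ Vinf + 1 by linarith) hRpos.le]
      have hr1 : (1:ℝ) ≤ r := le_trans hR21 hr
      have : |D| ≤ |D| * r := le_mul_of_one_le_right (abs_nonneg _) hr1
      simp only [hAdef]; nlinarith
    calc (deriv V r)^2 = deriv V r * deriv V r := sq (deriv V r) ▸ by ring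
      _ ≤ (A * r) * deriv V r := mul_le_mul_of_nonneg_right hup hpos.le
      _ = A * (r * deriv V r) := by ring
  -- bound on compact part
  obtain ⟨M0, hM0⟩ := (isCompact_Icc (a := -R2) (b := R2)).exists_bound_of_continuousOn
    hcont1.continuousOn
  set M : ℝ := max M0 0 with hMdef
  have hMnonneg : (0:ℝ) ≤ M := le_max_right _ _
  have hM : ∀ x ∈ Icc (-R2) R2, |deriv V x| ≤ M := by
    intro x hx
    exact le_trans (hM0 x hx) (le_max_left _ _)
  refine ⟨A, hApos, M^2 + R2 * M, by positivity, ?_⟩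
  intro r
  rcases le_or_gt R2 r with h1 | h1
  · have := main r h1
    nlinarith [mul_nonneg (mul_nonneg hApos.le hR2pos.le) hMnonneg, sq_nonneg M]
  · rcases le_or_gt r (-R2) with h2 | h2
    · -- r ≤ -R2 : use oddness
      have hs : R2 ≤ -r := by linarith
      have := main (-r) hs
      rw [hodd r] at this
      have heq1 : (-deriv V r)^2 = (deriv V r)^2 := by ring
      have heq2 : (-r) * (-deriv V r) = r * deriv V r := by ring
      rw [heq1, heq2] at this
      nlinarith [mul_nonneg (mul_nonneg hApos.le hR2pos.le) hMnonneg, sq_nonneg M]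
    · -- compact part
      have hmem : r ∈ Icc (-R2) R2 := ⟨h2.le, h1.le⟩
      have habs : |deriv V r| ≤ M := hM r hmem
      have hsq : (deriv V r)^2 ≤ M^2 := by
        nlinarith [sq_abs (deriv V r), abs_nonneg (deriv V r)]
      have hrabs : |r| ≤ R2 := abs_le.mpr ⟨h2.le, h1.le⟩
      have hmul : |r * deriv V r| ≤ R2 * M := by
        rw [abs_mul]
        exact mul_le_mul hrabs habs (abs_nonneg _) hR2pos.le
      have hlb : -(R2 * M) ≤ r * deriv V r := by
        have := neg_abs_le (r * deriv V r)
        linarith [(abs_le.mp hmul).1]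
      nlinarith [sq_nonneg (deriv V r)]
end

section
/- Let H be a real inner product space, L : H → H a linear map of the form L = A + S with A antisymmetric (⟨Au, v⟩ = −⟨u, Av⟩) and S symmetric negative semidefinite. If h ∈ H satisfies S h = −c h for some c > 0, and u solves λ u − L u = h with λ > 0, then ⟨u, −S u⟩ ≤ c⁻¹ ⟨h, h⟩ and λ ⟨u, u⟩ ≤ c⁻¹ ⟨h, h⟩. -/
open scoped RealInnerProductSpace

theorem resolvent_energy_bounds
    {H : Type*} [NormedAddCommGroup H] [InnerProductSpace ℝ H]
    (A S : H →ₗ[ℝ] H)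
    (hA : ∀ u v : H, ⟪A u, v⟫ = -⟪u, A v⟫)
    (hSsym : ∀ u v : H, ⟪S u, v⟫ = ⟪u, S v⟫)
    (hSneg : ∀ v : H, ⟪v, S v⟫ ≤ 0)
    (h : H) (c : ℝ) (hc : 0 < c) (hEigen : S h = -c • h)
    (lam : ℝ) (hlam : 0 < lam) (u : H)
    (hres : lam • u - A u - S u = h) :
    ⟪u, -(S u)⟫ ≤ c⁻¹ * ⟪h, h⟫ ∧ lam * ⟪u, u⟫ ≤ c⁻¹ * ⟪h, h⟫ := by
  have hAu : ⟪u, A u⟫ = 0 := by have h2 := hA u u; have h3 := real_inner_comm u (A u); linarith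
  have h1 : lam * ⟪u, u⟫ - ⟪u, S u⟫ = ⟪u, h⟫ := by
    have := congrArg (fun w => (⟪u, w⟫ : ℝ)) hres
    simp only [inner_sub_right, real_inner_smul_right] at this
    rw [hAu] at this; linarith
  have hSh : ∀ v : H, ⟪v, S h⟫ = -c * ⟪v, h⟫ := by
    intro v; rw [hEigen]; simp [real_inner_smul_right]
  have key : ⟪u, S u⟫ + 2 * ⟪u, h⟫ - c⁻¹ * ⟪h, h⟫ ≤ 0 := by
    have hv := hSneg (u - c⁻¹ • h)
    have e1 : ⟪h, S u⟫ = -c * ⟪h, u⟫ := by rw [← hSsym h u, hEigen]; simp [real_inner_smul_left]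
    have e2 : ⟪u, S h⟫ = -c * ⟪u, h⟫ := hSh u
    have e3 : ⟪h, S h⟫ = -c * ⟪h, h⟫ := hSh h
    have hcomm : ⟪h, u⟫ = ⟪u, h⟫ := real_inner_comm u h
    simp only [map_sub, map_smul, inner_sub_left, inner_sub_right,
      real_inner_smul_left, real_inner_smul_right, smul_eq_mul] at hv
    rw [e1, e2, e3, hcomm] at hv
    have hs1 : c⁻¹ * (-c * ⟪u, h⟫) = -⟪u, h⟫ := by field_simp
    have hs2 : c⁻¹ * (c⁻¹ * (-c * ⟪h, h⟫)) = -(c⁻¹ * ⟪h, h⟫) := by field_simp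
    rw [hs1, hs2] at hv
    linarith
  have hx : (0:ℝ) ≤ -⟪u, S u⟫ := by have := hSneg u; linarith
  have huu : (0:ℝ) ≤ ⟪u, u⟫ := real_inner_self_nonneg
  have hhh : (0:ℝ) ≤ ⟪h, h⟫ := real_inner_self_nonneg
  have hck : (0:ℝ) ≤ c⁻¹ * ⟪h, h⟫ := mul_nonneg (inv_nonneg.mpr hc.le) hhh
  have hlu : (0:ℝ) ≤ lam * ⟪u, u⟫ := mul_nonneg hlam.le huu
  constructor
  · rw [inner_neg_right]; linarith
  · linarith
end

section
/- Let H be a finite-dimensional real inner product space, A antisymmetric and S symmetric negative definite linear operators, L = A + S invertible considered on the orthogonal complement of constants. For h in the range of L, the quantity ⟨A h, (−L)⁻¹ (A h)⟩ = ⟨h, (−S) h⟩ − ⟨S h, (−L)⁻¹ (S h)⟩, and this quantity is nonnegative. -/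
open scoped RealInnerProductSpace

theorem green_kubo_algebraic_identity
    {H : Type*} [NormedAddCommGroup H] [InnerProductSpace ℝ H]
    [FiniteDimensional ℝ H]
    (A S : H →ₗ[ℝ] H)
    (hA : ∀ u v : H, ⟪A u, v⟫ = -⟪u, A v⟫)
    (hSsym : ∀ u v : H, ⟪S u, v⟫ = ⟪u, S v⟫)
    (hSnegdef : ∀ v : H, v ≠ 0 → ⟪v, S v⟫ < 0)
    (Linv : H →ₗ[ℝ] H)
    (hLinv1 : ∀ w : H, (-(A + S)) (Linv w) = w)
    (hLinv2 : ∀ w : H, Linv ((-(A + S)) w) = w)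
    (h : H) :
    ⟪A h, Linv (A h)⟫ = ⟪h, -(S h)⟫ - ⟪S h, Linv (S h)⟫ ∧
    0 ≤ ⟪A h, Linv (A h)⟫ := by
  have hA0 : ∀ v : H, ⟪A v, v⟫ = 0 := by
    intro v
    have h1 := hA v v
    have h2 := real_inner_comm v (A v)
    linarith
  set u := Linv (A h) with hu
  set w := Linv (S h) with hw
  have hNu : A u + S u = -(A h) := by
    have h1 : -(A u + S u) = A h := by simpa using hLinv1 (A h)
    exact neg_eq_iff_eq_neg.mp h1
  have hNw : A w + S w = -(S h) := by
    have h1 : -(A w + S w) = S h := by simpa using hLinv1 (S h)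
    exact neg_eq_iff_eq_neg.mp h1
  have huwh : u + w = -h := by
    have e : (-(A + S)) (-h) = A h + S h := by simp; abel
    rw [hu, hw, ← map_add, ← e]
    exact hLinv2 (-h)
  have key1 : ⟪A h, u⟫ = -⟪S u, u⟫ := by
    have h1 : ⟪A u + S u, u⟫ = ⟪-(A h), u⟫ := by rw [hNu]
    simp only [inner_add_left, inner_neg_left, hA0] at h1
    have h2 := real_inner_comm (A h) u
    linarith
  have key2 : ⟪S h, w⟫ = -⟪S w, w⟫ := by
    have h1 : ⟪A w + S w, w⟫ = ⟪-(S h), w⟫ := by rw [hNw]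
    simp only [inner_add_left, inner_neg_left, hA0] at h1
    linarith
  have hu2 : u = -h - w := eq_sub_of_add_eq huwh
  have hSuu : ⟪S u, u⟫ = ⟪S h, h⟫ + ⟪S h, w⟫ + ⟪S w, h⟫ + ⟪S w, w⟫ := by
    rw [hu2]
    simp only [map_sub, map_neg, inner_sub_left, inner_sub_right, inner_neg_left,
      inner_neg_right]
    ring
  have hsym : ⟪S w, h⟫ = ⟪S h, w⟫ := by
    rw [hSsym w h, real_inner_comm]
  have hident : ⟪A h, u⟫ = ⟪h, -(S h)⟫ - ⟪S h, w⟫ := by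
    have h3 : ⟪h, -(S h)⟫ = -⟪S h, h⟫ := by
      rw [inner_neg_right, real_inner_comm]
    rw [key1, hSuu, hsym, h3, key2]
    ring
  refine ⟨hident, ?_⟩
  rw [key1]
  rcases eq_or_ne u 0 with h0 | h0
  · simp [h0]
  · have := hSnegdef u h0
    have h2 := real_inner_comm u (S u)
    linarith
end
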